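/- arXiv:2511.11036 — 5 statements merged into one kernel-verified Lean document; each statement's English description precedes it below -/
import Mathlib

section
/- ∫₀^{log 2} s ds + ∫_{log 2}^∞ log(1/(1 − e^{−s})) ds = (1/2)·ζ(2) = π²/12. -/
open MeasureTheory

namespace Stmt3Aux

open Real Set Filter Topology

noncomputable def gg (s : ℝ) : ℝ := Real.log (1 / (1 - Real.exp (-s)))
noncomputable def hh (t : ℝ) : ℝ := t * (Real.exp (-t) / (1 - Real.exp (-t)))
noncomputable def sg (b : ℝ) : ℝ := -Real.log (1 - Real.exp (-b))

lemma l2pos : (0:ℝ) < Real.log 2 := Real.log_pos one_lt_two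

lemma exp_neg_lt_one {s : ℝ} (hs : 0 < s) : Real.exp (-s) < 1 := by
  calc Real.exp (-s) < Real.exp 0 := Real.exp_lt_exp.mpr (by linarith)
  _ = 1 := Real.exp_zero

lemma one_sub_exp_pos {s : ℝ} (hs : 0 < s) : 0 < 1 - Real.exp (-s) := by
  have := exp_neg_lt_one hs; linarith

lemma sg_pos {b : ℝ} (hb : 0 < b) : 0 < sg b := by
  have h1 := one_sub_exp_pos hb
  have h2 : (1:ℝ) - Real.exp (-b) < 1 := by have := Real.exp_pos (-b); linarith
  simpa [sg] using Real.log_neg h1 h2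

lemma sg_lt {b : ℝ} (hb : Real.log 2 < b) : sg b < Real.log 2 := by
  have hb0 : 0 < b := lt_trans l2pos hb
  have hhalf : Real.exp (-b) < 1/2 := by
    calc Real.exp (-b) < Real.exp (-Real.log 2) := Real.exp_lt_exp.mpr (by linarith)
    _ = 1/2 := by rw [Real.exp_neg, Real.exp_log two_pos]; norm_num
  have h1 : (1/2 : ℝ) < 1 - Real.exp (-b) := by linarith
  have h2 : Real.log (1/2) < Real.log (1 - Real.exp (-b)) := Real.log_lt_log (by norm_num) h1
  rw [one_div, Real.log_inv] at h2
  simp only [sg]; linarith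

lemma exp_neg_sg {t : ℝ} (ht : 0 < t) : Real.exp (-(sg t)) = 1 - Real.exp (-t) := by
  rw [sg, neg_neg, Real.exp_log (one_sub_exp_pos ht)]

lemma gg_sg {t : ℝ} (ht : 0 < t) : gg (sg t) = t := by
  rw [gg, exp_neg_sg ht, sub_sub_cancel, one_div, ← Real.exp_neg, neg_neg, Real.log_exp]

lemma sg_sg {b : ℝ} (hb : 0 < b) : sg (sg b) = b := by
  rw [sg, exp_neg_sg hb, sub_sub_cancel, Real.log_exp, neg_neg]

lemma sg_log2 : sg (Real.log 2) = Real.log 2 := by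
  rw [sg, Real.exp_neg, Real.exp_log two_pos, show (1:ℝ) - 2⁻¹ = 2⁻¹ by norm_num,
    Real.log_inv, neg_neg]

lemma gg_contOn : ContinuousOn gg (Ioi (0:ℝ)) := by
  apply ContinuousOn.log
  · exact continuousOn_const.div
      (continuousOn_const.sub (Real.continuous_exp.comp continuous_neg).continuousOn)
      (fun s hs => ne_of_gt (one_sub_exp_pos hs))
  · intro s hs
    exact one_div_ne_zero (ne_of_gt (one_sub_exp_pos hs))

lemma gg_nonneg {s : ℝ} (hs : 0 < s) : 0 ≤ gg s := by
  have h1 := one_sub_exp_pos hs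
  have h2 : (1:ℝ) ≤ 1 / (1 - Real.exp (-s)) := by
    rw [le_div_iff₀ h1]; have := Real.exp_pos (-s); linarith
  exact Real.log_nonneg h2

lemma hh_contOn : ContinuousOn hh (Ioi (0:ℝ)) := by
  apply continuousOn_id.mul
  exact ((Real.continuous_exp.comp continuous_neg).continuousOn).div
    (continuousOn_const.sub (Real.continuous_exp.comp continuous_neg).continuousOn)
    (fun s hs => ne_of_gt (one_sub_exp_pos hs))

lemma hh_nonneg {t : ℝ} (ht : 0 < t) : 0 ≤ hh t := by
  have h1 := one_sub_exp_pos ht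
  have h2 := (Real.exp_pos (-t)).le
  have : 0 ≤ Real.exp (-t) / (1 - Real.exp (-t)) := div_nonneg h2 h1.le
  exact mul_nonneg ht.le this

lemma hh_le_one {t : ℝ} (ht : 0 < t) : hh t ≤ 1 := by
  have h1 := one_sub_exp_pos ht
  have hmul : Real.exp (-t) * Real.exp t = 1 := by
    rw [← Real.exp_add]; simp
  rw [hh, ← mul_div_assoc, div_le_one h1]
  nlinarith [mul_le_mul_of_nonneg_left (Real.add_one_le_exp t) (Real.exp_pos (-t)).le, hmul]

/-- series expansion of `gg` -/
lemma gg_hasSum {s : ℝ} (hs : 0 < s) :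
    HasSum (fun n : ℕ => Real.exp (-(((n:ℝ)+1) * s)) / ((n:ℝ)+1)) (gg s) := by
  have hx : |Real.exp (-s)| < 1 := by
    rw [abs_of_pos (Real.exp_pos _)]; exact exp_neg_lt_one hs
  have h := Real.hasSum_pow_div_log_of_abs_lt_one hx
  have hgg : gg s = -Real.log (1 - Real.exp (-s)) := by rw [gg, one_div, Real.log_inv]
  have hterm : ∀ n : ℕ, Real.exp (-(((n:ℝ)+1) * s)) / ((n:ℝ)+1)
      = Real.exp (-s) ^ (n+1) / ((n:ℝ)+1) := by
    intro n
    rw [show (-(((n:ℝ)+1) * s)) = ((n+1 : ℕ) : ℝ) * (-s) by push_cast; ring,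
      Real.exp_nat_mul]
  rw [hgg]
  exact HasSum.congr_fun h hterm

lemma hh_hasSum {t : ℝ} (ht : 0 < t) :
    HasSum (fun n : ℕ => t * Real.exp (-(((n:ℝ)+1) * t))) (hh t) := by
  have h := (hasSum_geometric_of_lt_one (Real.exp_pos (-t)).le
    (exp_neg_lt_one ht)).mul_left (t * Real.exp (-t))
  have hterm : ∀ n : ℕ, t * Real.exp (-(((n:ℝ)+1) * t))
      = t * Real.exp (-t) * Real.exp (-t) ^ n := by
    intro n
    rw [show (-(((n:ℝ)+1) * t)) = ((n+1 : ℕ) : ℝ) * (-t) by push_cast; ring,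
      Real.exp_nat_mul, pow_succ]
    ring
  have hval : t * Real.exp (-t) * (1 - Real.exp (-t))⁻¹ = hh t := by
    rw [hh, div_eq_mul_inv]; ring
  exact hval ▸ HasSum.congr_fun h hterm

/-- basic improper exponential integral -/
lemma int_exp (c : ℝ) (n : ℕ) :
    ∫ s in Ioi c, Real.exp (-(((n:ℝ)+1) * s))
      = Real.exp (-(((n:ℝ)+1) * c)) / ((n:ℝ)+1) := by
  have hn : (0:ℝ) < (n:ℝ) + 1 := by positivity
  have hd : ∀ x ∈ Ici c, HasDerivAt
      (fun s : ℝ => -Real.exp (-(((n:ℝ)+1) * s)) / ((n:ℝ)+1))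
      (Real.exp (-(((n:ℝ)+1) * x))) x := by
    intro x _
    have h0 : HasDerivAt (fun s : ℝ => ((n:ℝ)+1) * s) ((n:ℝ)+1) x := by
      simpa using (hasDerivAt_id x).const_mul ((n:ℝ)+1)
    have h1 := h0.neg
    have h3 : HasDerivAt (fun s : ℝ => -(Real.exp (-(((n:ℝ)+1) * s)) / ((n:ℝ)+1)))
        (-(Real.exp (-(((n:ℝ)+1) * x)) * -((n:ℝ)+1) / ((n:ℝ)+1))) x :=
      ((h1.exp).div_const ((n:ℝ)+1)).neg
    have hne : ((n:ℝ)+1) ≠ 0 := ne_of_gt hn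
    convert h3 using 1
    · funext s; rw [neg_div]
    · rw [mul_neg, neg_div, neg_neg, mul_div_assoc, div_self hne, mul_one]
  have hint : IntegrableOn (fun s => Real.exp (-(((n:ℝ)+1) * s))) (Ioi c) := by
    simpa only [neg_mul] using exp_neg_integrableOn_Ioi c hn
  have htend : Tendsto (fun s : ℝ => -Real.exp (-(((n:ℝ)+1) * s)) / ((n:ℝ)+1))
      atTop (𝓝 0) := by
    have h0 : Tendsto (fun s : ℝ => ((n:ℝ)+1) * s) atTop atTop :=
      tendsto_id.const_mul_atTop hn
    have h2 : Tendsto (fun s : ℝ => Real.exp (-(((n:ℝ)+1) * s))) atTop (𝓝 0) :=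
      Real.tendsto_exp_neg_atTop_nhds_zero.comp h0
    simpa using (h2.neg.div_const ((n:ℝ)+1))
  have := integral_Ioi_of_hasDerivAt_of_tendsto' hd hint htend
  rw [this]
  field_simp
  ring

lemma exp_neg_mul_log2 (n : ℕ) :
    Real.exp (-(((n:ℝ)+1) * Real.log 2)) = (1/2:ℝ) ^ (n+1) := by
  rw [show (-(((n:ℝ)+1) * Real.log 2)) = ((n+1 : ℕ) : ℝ) * (-Real.log 2) by push_cast; ring,
    Real.exp_nat_mul, Real.exp_neg, Real.exp_log two_pos]
  norm_num

lemma A_summable : Summable (fun n : ℕ => (1/2:ℝ)^(n+1) / ((n:ℝ)+1)^2) := by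
  apply Summable.of_nonneg_of_le (fun n => by positivity) (fun n => ?_)
    (summable_geometric_of_lt_one (by norm_num : (0:ℝ) ≤ 1/2) (by norm_num))
  calc (1/2:ℝ)^(n+1) / ((n:ℝ)+1)^2 ≤ (1/2:ℝ)^(n+1) := by
        apply div_le_self (by positivity)
        have : (0:ℝ) ≤ (n:ℝ) := Nat.cast_nonneg n
        nlinarith
  _ ≤ (1/2:ℝ)^n := pow_le_pow_of_le_one (by norm_num) (by norm_num) (by omega)

noncomputable def A : ℝ := ∑' n : ℕ, (1/2:ℝ)^(n+1) / ((n:ℝ)+1)^2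

lemma A_hasSum : HasSum (fun n : ℕ => (1/2:ℝ)^(n+1) / ((n:ℝ)+1)^2) A :=
  A_summable.hasSum


lemma int_gg_n (n : ℕ) :
    ∫ s in Ioi (Real.log 2), Real.exp (-(((n:ℝ)+1) * s)) / ((n:ℝ)+1)
      = (1/2:ℝ)^(n+1) / ((n:ℝ)+1)^2 := by
  rw [integral_div, int_exp, exp_neg_mul_log2, div_div, ← pow_two]

lemma gg_integrableOn : IntegrableOn gg (Ioi (Real.log 2)) := by
  have hb0 : IntegrableOn (fun s : ℝ => 2 * Real.exp (-s)) (Ioi (Real.log 2)) := by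
    have := (exp_neg_integrableOn_Ioi (Real.log 2) one_pos).const_mul 2
    simp only [neg_one_mul] at this
    exact this
  apply Integrable.mono' hb0
  · exact (gg_contOn.mono (fun s hs => lt_trans l2pos hs)).aestronglyMeasurable
      measurableSet_Ioi
  · rw [ae_restrict_iff' measurableSet_Ioi]
    filter_upwards with s hs
    have hs0 : 0 < s := lt_trans l2pos hs
    have h1 := one_sub_exp_pos hs0
    have hs' : Real.log 2 < s := hs
    have hx : Real.exp (-s) ≤ 1/2 := by
      have h := Real.exp_le_exp.mpr (by linarith : -s ≤ -Real.log 2)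
      rwa [Real.exp_neg (Real.log 2), Real.exp_log two_pos, ← one_div] at h
    rw [Real.norm_of_nonneg (gg_nonneg hs0)]
    have h2 : gg s ≤ 1 / (1 - Real.exp (-s)) - 1 :=
      Real.log_le_sub_one_of_pos (by positivity)
    have h3 : 1 / (1 - Real.exp (-s)) - 1 ≤ 2 * Real.exp (-s) := by
      rw [sub_le_iff_le_add, div_le_iff₀ h1]
      nlinarith [Real.exp_pos (-s)]
    linarith

lemma hh_integrableOn : IntegrableOn hh (Ioc 0 (Real.log 2)) := by
  have hconst : IntegrableOn (fun _ : ℝ => (1:ℝ)) (Ioc 0 (Real.log 2)) volume :=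
    integrableOn_const measure_Ioc_lt_top.ne
  apply Integrable.mono' hconst
  · exact (hh_contOn.mono (fun t ht => ht.1)).aestronglyMeasurable measurableSet_Ioc
  · rw [ae_restrict_iff' measurableSet_Ioc]
    filter_upwards with t ht
    rw [Real.norm_of_nonneg (hh_nonneg ht.1)]
    exact hh_le_one ht.1

/-- the left-hand improper integral equals `A` -/
lemma gg_term_integrable (n : ℕ) :
    Integrable (fun s : ℝ => Real.exp (-(((n:ℝ)+1) * s)) / ((n:ℝ)+1))
      (volume.restrict (Ioi (Real.log 2))) := by
  have hn : (0:ℝ) < (n:ℝ)+1 := by positivity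
  have h : IntegrableOn (fun s : ℝ => Real.exp (-(((n:ℝ)+1) * s))) (Ioi (Real.log 2)) := by
    simpa only [neg_mul] using exp_neg_integrableOn_Ioi (Real.log 2) hn
  exact h.div_const _

lemma L_eq_A : ∫ s in Ioi (Real.log 2), gg s = A := by
  have hsumm : Summable fun n : ℕ =>
      ∫ s in Ioi (Real.log 2), ‖Real.exp (-(((n:ℝ)+1) * s)) / ((n:ℝ)+1)‖ := by
    apply Summable.congr A_summable
    intro n
    rw [show (fun s : ℝ => ‖Real.exp (-(((n:ℝ)+1) * s)) / ((n:ℝ)+1)‖)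
        = fun s : ℝ => Real.exp (-(((n:ℝ)+1) * s)) / ((n:ℝ)+1) from
      funext fun s => Real.norm_of_nonneg (by positivity)]
    exact (int_gg_n n).symm
  rw [setIntegral_congr_fun measurableSet_Ioi
    (fun s hs => ((gg_hasSum (lt_trans l2pos hs)).tsum_eq).symm)]
  rw [← integral_tsum_of_summable_integral_norm gg_term_integrable hsumm]
  exact tsum_congr int_gg_n

/-- change of variables -/
lemma cov {b : ℝ} (hb : Real.log 2 < b) :
    ∫ s in (Real.log 2)..b, gg s = ∫ t in (sg b)..(Real.log 2), hh t := by
  have hb0 : 0 < b := lt_trans l2pos hb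
  have h1 : 0 < sg b := sg_pos hb0
  have h2 : sg b < Real.log 2 := sg_lt hb
  have huIcc : uIcc (sg b) (Real.log 2) = Icc (sg b) (Real.log 2) := uIcc_of_le h2.le
  have hmem : ∀ t ∈ uIcc (sg b) (Real.log 2), 0 < t := by
    intro t ht
    rw [huIcc] at ht
    exact lt_of_lt_of_le h1 ht.1
  have hder : ∀ t ∈ uIcc (sg b) (Real.log 2),
      HasDerivAt sg (-(Real.exp (-t) / (1 - Real.exp (-t)))) t := by
    intro t ht
    have ht0 := hmem t ht
    have he : HasDerivAt (fun t : ℝ => 1 - Real.exp (-t)) (Real.exp (-t)) t := by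
      have := ((hasDerivAt_neg t).exp).const_sub 1
      simpa using this
    have h2' := (he.log (ne_of_gt (one_sub_exp_pos ht0))).neg
    exact h2'
  have hcont' : ContinuousOn (fun t : ℝ => -(Real.exp (-t) / (1 - Real.exp (-t))))
      (uIcc (sg b) (Real.log 2)) := by
    apply ContinuousOn.neg
    exact ((Real.continuous_exp.comp continuous_neg).continuousOn).div
      (continuousOn_const.sub (Real.continuous_exp.comp continuous_neg).continuousOn)
      (fun t ht => ne_of_gt (one_sub_exp_pos (hmem t ht)))
  have himg : sg '' uIcc (sg b) (Real.log 2) ⊆ Ioi 0 := by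
    rintro _ ⟨t, ht, rfl⟩
    exact sg_pos (hmem t ht)
  have key := intervalIntegral.integral_comp_smul_deriv' hder hcont' (gg_contOn.mono himg)
  rw [sg_sg hb0, sg_log2] at key
  have heq : EqOn (fun t => (-(Real.exp (-t) / (1 - Real.exp (-t)))) • (gg ∘ sg) t)
      (fun t => -hh t) (uIcc (sg b) (Real.log 2)) := by
    intro t ht
    have ht0 := hmem t ht
    simp only [Function.comp, smul_eq_mul, gg_sg ht0, hh]
    ring
  rw [intervalIntegral.integral_congr heq, intervalIntegral.integral_neg] at key
  rw [intervalIntegral.integral_symm b (Real.log 2)]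
  linarith

lemma tendsto_sg : Tendsto sg atTop (𝓝 0) := by
  have h1 : Tendsto (fun b : ℝ => 1 - Real.exp (-b)) atTop (𝓝 1) := by
    simpa using tendsto_const_nhds.sub Real.tendsto_exp_neg_atTop_nhds_zero
  have h2 : ContinuousAt (fun x : ℝ => -Real.log x) 1 :=
    (Real.continuousAt_log one_ne_zero).neg
  have := h2.tendsto.comp h1
  rw [Real.log_one, neg_zero] at this
  exact this

lemma tendsto_rhs : Tendsto (fun b => ∫ t in (sg b)..(Real.log 2), hh t) atTop
    (𝓝 (∫ t in Ioc 0 (Real.log 2), hh t)) := by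
  have key : ∀ᶠ b in atTop,
      ‖(∫ t in (sg b)..(Real.log 2), hh t) - ∫ t in Ioc 0 (Real.log 2), hh t‖ ≤ sg b := by
    filter_upwards [eventually_gt_atTop (Real.log 2)] with b hb
    have h1 : 0 < sg b := sg_pos (lt_trans l2pos hb)
    have h2 : sg b < Real.log 2 := sg_lt hb
    have hsplit : ∫ t in Ioc 0 (Real.log 2), hh t
        = (∫ t in Ioc 0 (sg b), hh t) + ∫ t in Ioc (sg b) (Real.log 2), hh t := by
      rw [← setIntegral_union (Ioc_disjoint_Ioc_of_le le_rfl) measurableSet_Ioc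
        (hh_integrableOn.mono_set (Ioc_subset_Ioc le_rfl h2.le))
        (hh_integrableOn.mono_set (Ioc_subset_Ioc h1.le le_rfl)),
        Ioc_union_Ioc_eq_Ioc h1.le h2.le]
    rw [intervalIntegral.integral_of_le h2.le, hsplit]
    rw [show (∫ t in Ioc (sg b) (Real.log 2), hh t)
        - ((∫ t in Ioc 0 (sg b), hh t) + ∫ t in Ioc (sg b) (Real.log 2), hh t)
        = -(∫ t in Ioc 0 (sg b), hh t) by ring, norm_neg]
    have hbnd : ‖∫ t in Ioc 0 (sg b), hh t‖ ≤ 1 * (volume (Ioc 0 (sg b))).toReal := by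
      apply norm_setIntegral_le_of_norm_le_const measure_Ioc_lt_top
      · intro t ht
        rw [Real.norm_of_nonneg (hh_nonneg ht.1)]
        exact hh_le_one ht.1
    rw [Real.volume_Ioc, one_mul] at hbnd
    rw [ENNReal.toReal_ofReal (by linarith)] at hbnd
    linarith
  have h0 := squeeze_zero_norm' key tendsto_sg
  have := h0.add (tendsto_const_nhds (x := ∫ t in Ioc 0 (Real.log 2), hh t)
    (f := atTop))
  simpa using this

lemma int_hh_n (n : ℕ) :
    ∫ t in Ioc 0 (Real.log 2), t * Real.exp (-(((n:ℝ)+1) * t)) =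
      (1 - (1/2:ℝ)^(n+1)) / ((n:ℝ)+1)^2 - Real.log 2 * (1/2:ℝ)^(n+1) / ((n:ℝ)+1) := by
  have hc : (0:ℝ) < (n:ℝ) + 1 := by positivity
  have hne : ((n:ℝ)+1) ≠ 0 := ne_of_gt hc
  rw [← intervalIntegral.integral_of_le l2pos.le]
  have hder : ∀ t ∈ uIcc (0:ℝ) (Real.log 2), HasDerivAt
      (fun t : ℝ => -(t * Real.exp (-(((n:ℝ)+1) * t))) / ((n:ℝ)+1)
        - Real.exp (-(((n:ℝ)+1) * t)) / ((n:ℝ)+1)^2)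
      (t * Real.exp (-(((n:ℝ)+1) * t))) t := by
    intro t _
    have h0 : HasDerivAt (fun s : ℝ => ((n:ℝ)+1) * s) ((n:ℝ)+1) t := by
      simpa using (hasDerivAt_id t).const_mul ((n:ℝ)+1)
    have h2 := (h0.neg).exp
    have h3 := (hasDerivAt_id t).mul h2
    have h4 := ((h3.neg).div_const ((n:ℝ)+1)).sub (h2.div_const (((n:ℝ)+1)^2))
    refine h4.congr_deriv ?_
    simp only [Pi.neg_apply, id]
    field_simp
    ring
  have hii : IntervalIntegrable (fun t : ℝ => t * Real.exp (-(((n:ℝ)+1) * t)))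
      volume 0 (Real.log 2) := by
    apply Continuous.intervalIntegrable
    exact continuous_id.mul (Real.continuous_exp.comp (by continuity))
  rw [intervalIntegral.integral_eq_sub_of_hasDerivAt hder hii]
  rw [exp_neg_mul_log2]
  norm_num [Real.exp_zero]
  field_simp
  ring

lemma zeta2' : HasSum (fun n : ℕ => 1/((n:ℝ)+1)^2) (Real.pi ^ 2 / 6) := by
  have := (hasSum_nat_add_iff' (f := fun n : ℕ => 1/(n:ℝ)^2) 1).mpr hasSum_zeta_two
  simpa using this

lemma log2_hasSum : HasSum (fun n : ℕ => (1/2:ℝ)^(n+1)/((n:ℝ)+1)) (Real.log 2) := by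
  have h := Real.hasSum_pow_div_log_of_abs_lt_one
    (x := (1/2:ℝ)) (by rw [abs_of_pos (by norm_num)]; norm_num)
  rw [show (1:ℝ) - 1/2 = 1/2 by norm_num, one_div, Real.log_inv, neg_neg] at h
  simpa using h

lemma I_hh : ∫ t in Ioc 0 (Real.log 2), hh t
    = Real.pi ^ 2 / 6 - A - Real.log 2 * Real.log 2 := by
  have hint : ∀ n : ℕ, Integrable (fun t : ℝ => t * Real.exp (-(((n:ℝ)+1) * t)))
      (volume.restrict (Ioc 0 (Real.log 2))) := by
    intro n
    exact (continuous_id.mul (Real.continuous_exp.comp (by continuity))).integrableOn_Ioc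
  have hVsum : HasSum (fun n : ℕ => (1 - (1/2:ℝ)^(n+1)) / ((n:ℝ)+1)^2
      - Real.log 2 * (1/2:ℝ)^(n+1) / ((n:ℝ)+1))
      (Real.pi ^ 2 / 6 - A - Real.log 2 * Real.log 2) := by
    have h := (zeta2'.sub A_hasSum).sub (log2_hasSum.mul_left (Real.log 2))
    apply HasSum.congr_fun h
    intro n
    ring
  rw [setIntegral_congr_fun measurableSet_Ioc
    (fun t ht => ((hh_hasSum ht.1).tsum_eq).symm)]
  have hsumm : Summable fun n : ℕ =>
      ∫ t in Ioc 0 (Real.log 2), ‖t * Real.exp (-(((n:ℝ)+1) * t))‖ := by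
    apply Summable.congr hVsum.summable
    intro n
    rw [setIntegral_congr_fun measurableSet_Ioc (g := fun t : ℝ =>
        t * Real.exp (-(((n:ℝ)+1) * t)))
      (fun t ht => Real.norm_of_nonneg (mul_nonneg ht.1.le (Real.exp_pos _).le))]
    exact (int_hh_n n).symm
  rw [← integral_tsum_of_summable_integral_norm hint hsumm]
  rw [← hVsum.tsum_eq]
  exact tsum_congr int_hh_n


lemma L_eq_I : ∫ s in Ioi (Real.log 2), gg s = ∫ t in Ioc 0 (Real.log 2), hh t := by
  have hL1 : Tendsto (fun b => ∫ s in (Real.log 2)..b, gg s) atTop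
      (𝓝 (∫ s in Ioi (Real.log 2), gg s)) :=
    intervalIntegral_tendsto_integral_Ioi _ gg_integrableOn tendsto_id
  have hL2 : Tendsto (fun b => ∫ s in (Real.log 2)..b, gg s) atTop
      (𝓝 (∫ t in Ioc 0 (Real.log 2), hh t)) := by
    apply tendsto_rhs.congr'
    filter_upwards [eventually_gt_atTop (Real.log 2)] with b hb
    exact (cov hb).symm
  exact tendsto_nhds_unique hL1 hL2

lemma A_val : A = Real.pi ^ 2 / 12 - Real.log 2 * Real.log 2 / 2 := by
  have h1 : ∫ s in Ioi (Real.log 2), gg s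
      = Real.pi ^ 2 / 6 - A - Real.log 2 * Real.log 2 := by
    rw [L_eq_I, I_hh]
  have h2 := L_eq_A
  linarith

lemma final : (∫ s in (0:ℝ)..(Real.log 2), s) +
    (∫ s in Set.Ioi (Real.log 2), Real.log (1 / (1 - Real.exp (-s)))) =
    Real.pi ^ 2 / 12 := by
  have hgg : (∫ s in Set.Ioi (Real.log 2), Real.log (1 / (1 - Real.exp (-s)))) = A := by
    have := L_eq_A
    simp only [gg] at this
    exact this
  rw [hgg, A_val, integral_id]
  ring

end Stmt3Aux

theorem stmt_3 :
    (∫ s in (0:ℝ)..(Real.log 2), s) +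
      (∫ s in Set.Ioi (Real.log 2), Real.log (1 / (1 - Real.exp (-s)))) =
      Real.pi ^ 2 / 12 := Stmt3Aux.final
end

section
/- Let f : [0,∞) → [0,∞) be continuous, nonincreasing, with u ↦ u + f(u) nondecreasing. Define Φ(x,y) = max{x,y} + f(|x−y|). Then Φ is monotone in each argument: if x ≤ x′ then Φ(x,y) ≤ Φ(x′,y) for every y. -/
theorem stmt_9 (f : ℝ → ℝ)
    (hcont : ContinuousOn f (Set.Ici (0:ℝ)))
    (hnonneg : ∀ u ∈ Set.Ici (0:ℝ), 0 ≤ f u)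
    (hanti : AntitoneOn f (Set.Ici (0:ℝ)))
    (hmap : MonotoneOn (fun u => u + f u) (Set.Ici (0:ℝ)))
    (Φ : ℝ → ℝ → ℝ) (hΦ : ∀ x y, Φ x y = max x y + f |x - y|) :
    ∀ x x' y : ℝ, x ≤ x' → Φ x y ≤ Φ x' y := by
  intro x x' y hxx'
  rw [hΦ, hΦ]
  rcases le_or_gt y x with hyx | hxy
  · -- y ≤ x ≤ x'
    have hyx' : y ≤ x' := hyx.trans hxx'
    rw [max_eq_left hyx, max_eq_left hyx', abs_of_nonneg (by linarith), abs_of_nonneg (by linarith)]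
    have := hmap (Set.mem_Ici.2 (by linarith : (0:ℝ) ≤ x - y)) (Set.mem_Ici.2 (by linarith : (0:ℝ) ≤ x' - y)) (by linarith)
    simp only at this
    linarith
  · rcases le_or_gt y x' with hyx' | hx'y
    · -- x < y ≤ x'
      rw [max_eq_right hxy.le, max_eq_left hyx', abs_of_nonpos (by linarith), abs_of_nonneg (by linarith)]
      have h1 : f (-(x - y)) ≤ f 0 :=
        hanti (Set.mem_Ici.2 le_rfl) (Set.mem_Ici.2 (by linarith)) (by linarith)
      have h2 := hmap (Set.mem_Ici.2 le_rfl) (Set.mem_Ici.2 (by linarith : (0:ℝ) ≤ x' - y)) (by linarith)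
      simp only at h2
      linarith
    · -- x ≤ x' < y
      rw [max_eq_right hxy.le, max_eq_right hx'y.le, abs_of_nonpos (by linarith), abs_of_nonpos (by linarith)]
      have := hanti (Set.mem_Ici.2 (by linarith : (0:ℝ) ≤ -(x' - y))) (Set.mem_Ici.2 (by linarith : (0:ℝ) ≤ -(x - y))) (by linarith : -(x' - y) ≤ -(x - y))
      linarith
end

section
/- Let T be an operator on the space of nondecreasing right-continuous functions F : ℝ → [0,1] (extended CDFs), satisfying: (i) monotonicity (F ≤ G pointwise implies TF ≤ TG), (ii) commutation with constants (if c₋ ≤ F ≤ c₊ pointwise with c₋,c₊ ∈ [0,1] and c ∈ [−c₋, 1−c₊], then T(F+c) = TF + c), and (iii) stationarity at infinity (lim_{x→±∞} TF(x) = lim_{x→±∞} F(x)). Then T is contractive in the supremum norm: ‖TF − TG‖_∞ ≤ ‖F − G‖_∞ for all such F, G. -/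
/-- An extended CDF: a nondecreasing, right-continuous function `ℝ → [0,1]`. -/
def IsCDF (F : ℝ → ℝ) : Prop :=
  Monotone F ∧ (∀ x, F x ∈ Set.Icc (0:ℝ) 1) ∧ ∀ x, ContinuousWithinAt F (Set.Ici x) x

private lemma key_half (T : (ℝ → ℝ) → (ℝ → ℝ))
    (hmono : ∀ F G, IsCDF F → IsCDF G → (∀ x, F x ≤ G x) → ∀ x, T F x ≤ T G x)
    (hconst : ∀ F (cm cp c : ℝ), IsCDF F → (0:ℝ) ≤ cm → cp ≤ 1 →
      (∀ x, cm ≤ F x ∧ F x ≤ cp) → -cm ≤ c → c ≤ 1 - cp →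
      T (fun x => F x + c) = fun x => T F x + c)
    (F G : ℝ → ℝ) (hF : IsCDF F) (hG : IsCDF G) (C : ℝ)
    (hC0 : 0 ≤ C) (hC1 : C ≤ 1) (h : ∀ y, F y - G y ≤ C) :
    ∀ x, T F x ≤ T G x + C := by
  set N : ℝ → ℝ := fun x => min (G x) (1 - C) with hNdef
  have hN : IsCDF N := by
    refine ⟨fun a b hab => min_le_min (hG.1 hab) le_rfl, fun x => ?_, fun x => ?_⟩
    · constructor
      · exact le_min (hG.2.1 x).1 (by linarith)
      · exact le_trans (min_le_left _ _) (hG.2.1 x).2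
    · exact (hG.2.2 x).min continuousWithinAt_const
  have hMN : T (fun x => N x + C) = fun x => T N x + C := by
    refine hconst N 0 (1 - C) C hN le_rfl (by linarith) (fun x => ?_) (by linarith) (by linarith)
    exact ⟨le_min (hG.2.1 x).1 (by linarith), min_le_right _ _⟩
  have hM : IsCDF (fun x => N x + C) := by
    refine ⟨fun a b hab => by simpa using add_le_add_right (hN.1 hab) C, fun x => ?_, fun x => ?_⟩
    · have := hN.2.1 x
      constructor
      · simp only; linarith [this.1]
      · have : N x ≤ 1 - C := min_le_right _ _
        simp only; linarith
    · exact (hN.2.2 x).add continuousWithinAt_const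
  have hFM : ∀ x, F x ≤ N x + C := by
    intro x
    have : N x + C = min (G x + C) ((1 - C) + C) := (min_add_add_right _ _ _).symm
    rw [this]
    exact le_min (by linarith [h x]) (by linarith [(hF.2.1 x).2])
  intro x
  have h1 : T F x ≤ T (fun x => N x + C) x := hmono F _ hF hM hFM x
  have h2 : T N x ≤ T G x := hmono N G hN hG (fun x => min_le_left _ _) x
  rw [hMN] at h1
  simp only at h1
  linarith

theorem stmt_11 (T : (ℝ → ℝ) → (ℝ → ℝ))
    (hmaps : ∀ F, IsCDF F → IsCDF (T F))
    (hmono : ∀ F G, IsCDF F → IsCDF G → (∀ x, F x ≤ G x) → ∀ x, T F x ≤ T G x)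
    (hconst : ∀ F (cm cp c : ℝ), IsCDF F → (0:ℝ) ≤ cm → cp ≤ 1 →
      (∀ x, cm ≤ F x ∧ F x ≤ cp) → -cm ≤ c → c ≤ 1 - cp →
      T (fun x => F x + c) = fun x => T F x + c)
    (hstat_top : ∀ F L, IsCDF F → Filter.Tendsto F Filter.atTop (nhds L) →
      Filter.Tendsto (T F) Filter.atTop (nhds L))
    (hstat_bot : ∀ F L, IsCDF F → Filter.Tendsto F Filter.atBot (nhds L) →
      Filter.Tendsto (T F) Filter.atBot (nhds L)) :
    ∀ F G : ℝ → ℝ, IsCDF F → IsCDF G →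
      ∀ C : ℝ, (∀ y, |F y - G y| ≤ C) → ∀ x, |T F x - T G x| ≤ C := by
  intro F G hF hG C h x
  have hC0 : 0 ≤ C := le_trans (abs_nonneg _) (h 0)
  rcases le_or_gt C 1 with hC1 | hC1
  · have k1 := key_half T hmono hconst F G hF hG C hC0 hC1
      (fun y => le_trans (le_abs_self _) (h y)) x
    have k2 := key_half T hmono hconst G F hG hF C hC0 hC1
      (fun y => le_trans (le_abs_self _) (by rw [abs_sub_comm]; exact h y)) x
    rw [abs_sub_le_iff]; constructor <;> linarith
  · have h1 := (hmaps F hF).2.1 x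
    have h2 := (hmaps G hG).2.1 x
    rw [abs_sub_le_iff]
    constructor <;> [linarith [h1.2, h2.1]; linarith [h2.2, h1.1]]
end

section
/- Let T be an operator on extended CDFs satisfying monotonicity, commutation with constants, and stationarity at infinity (as in the contractivity proposition). If F₁, F₂ are extended CDFs with F₂ ≤ TF₁ pointwise, then for any δ ∈ [0,1] and c ∈ [0,1−δ], the functions Gᵢ = max{Fᵢ − δ, c} satisfy G₂ ≤ TG₁ pointwise. -/
theorem stmt_12 (T : (ℝ → ℝ) → (ℝ → ℝ))
    (hmaps : ∀ F, IsCDF F → IsCDF (T F))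
    (hmono : ∀ F G, IsCDF F → IsCDF G → (∀ x, F x ≤ G x) → ∀ x, T F x ≤ T G x)
    (hconst : ∀ F (cm cp c : ℝ), IsCDF F → (0:ℝ) ≤ cm → cp ≤ 1 →
      (∀ x, cm ≤ F x ∧ F x ≤ cp) → -cm ≤ c → c ≤ 1 - cp →
      T (fun x => F x + c) = fun x => T F x + c)
    (hstat_top : ∀ F L, IsCDF F → Filter.Tendsto F Filter.atTop (nhds L) →
      Filter.Tendsto (T F) Filter.atTop (nhds L))
    (hstat_bot : ∀ F L, IsCDF F → Filter.Tendsto F Filter.atBot (nhds L) →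
      Filter.Tendsto (T F) Filter.atBot (nhds L))
    (F₁ F₂ : ℝ → ℝ) (hF₁ : IsCDF F₁) (hF₂ : IsCDF F₂)
    (hle : ∀ x, F₂ x ≤ T F₁ x)
    (δ c : ℝ) (hδ : δ ∈ Set.Icc (0:ℝ) 1) (hc : c ∈ Set.Icc (0:ℝ) (1 - δ)) :
    ∀ x, max (F₂ x - δ) c ≤ T (fun y => max (F₁ y - δ) c) x := by
  obtain ⟨hδ0, hδ1⟩ := hδ
  obtain ⟨hc0, hc1⟩ := hc
  set G₁ : ℝ → ℝ := fun y => max (F₁ y - δ) c with hG₁def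
  set H : ℝ → ℝ := fun y => max (F₁ y) (c + δ) with hHdef
  have hcd1 : c + δ ≤ 1 := by linarith
  have hG₁ : IsCDF G₁ := by
    refine ⟨fun a b hab => max_le_max (by linarith [hF₁.1 hab]) le_rfl, fun x => ⟨le_trans hc0 (le_max_right _ _), max_le (by linarith [(hF₁.2.1 x).2]) (by linarith)⟩, fun x => ((hF₁.2.2 x).sub continuousWithinAt_const).max continuousWithinAt_const⟩
  have hH : IsCDF H := by
    refine ⟨fun a b hab => max_le_max (hF₁.1 hab) le_rfl, fun x => ⟨le_trans (by linarith) (le_max_right _ _), max_le (hF₁.2.1 x).2 hcd1⟩, fun x => (hF₁.2.2 x).max continuousWithinAt_const⟩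
  -- G₁ = H + (-δ)
  have hGH : G₁ = fun y => H y + (-δ) := by
    funext y
    simp only [hG₁def, hHdef]
    rcases le_total (F₁ y) (c + δ) with h | h
    · rw [max_eq_right h, max_eq_right (by linarith)]; ring
    · rw [max_eq_left h, max_eq_left (by linarith)]; ring
  have hTG : T G₁ = fun x => T H x + (-δ) := by
    rw [hGH]
    exact hconst H (c + δ) 1 (-δ) hH (by linarith) le_rfl
      (fun x => ⟨le_max_right _ _, max_le (hF₁.2.1 x).2 hcd1⟩) (by linarith) (by linarith)
  -- T of constant c is constant c
  have hz : IsCDF (fun _ : ℝ => (0:ℝ)) :=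
    ⟨monotone_const, fun _ => ⟨le_rfl, zero_le_one⟩, fun _ => continuousWithinAt_const⟩
  have hT0 : T (fun _ => (0:ℝ)) = fun _ => (0:ℝ) := by
    have hm := (hmaps _ hz).1
    have ht := hstat_top _ 0 hz tendsto_const_nhds
    have hb := hstat_bot _ 0 hz tendsto_const_nhds
    funext x
    have h1 : T (fun _ => (0:ℝ)) x ≤ 0 :=
      ge_of_tendsto ht (Filter.eventually_atTop.2 ⟨x, fun y hy => hm hy⟩)
    have h2 : 0 ≤ T (fun _ => (0:ℝ)) x :=
      le_of_tendsto hb (Filter.eventually_atBot.2 ⟨x, fun y hy => hm hy⟩)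
    linarith
  have hTc : T (fun _ => c) = fun _ => c := by
    have := hconst (fun _ => (0:ℝ)) 0 0 c hz le_rfl zero_le_one
      (fun _ => ⟨le_rfl, le_rfl⟩) (by linarith) (by linarith)
    simpa [hT0] using this
  have hcCDF : IsCDF (fun _ : ℝ => c) :=
    ⟨monotone_const, fun _ => ⟨hc0, by linarith⟩, fun _ => continuousWithinAt_const⟩
  intro x
  apply max_le
  · have h1 : T F₁ x ≤ T H x := hmono F₁ H hF₁ hH (fun y => le_max_left _ _) x
    have h2 : T G₁ x = T H x - δ := by rw [hTG]; ring
    have := hle x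
    rw [h2]
    linarith
  · have h1 : T (fun _ => c) x ≤ T G₁ x :=
      hmono _ _ hcCDF hG₁ (fun y => le_max_right _ _) x
    rw [hTc] at h1
    exact h1
end

section
/- Let F, G : ℝ → [0,1] be extended CDFs with F ≤ G pointwise. Then there exists a Borel probability measure Π on ℝ̄ × ℝ̄ supported on {(x,y) : x ≤ y} whose first marginal has CDF G and whose second marginal has CDF F. -/
open MeasureTheory

noncomputable def erealQuantile (F : ℝ → ℝ) (u : ℝ) : EReal :=
  sInf (Real.toEReal '' {t : ℝ | u ≤ F t})

lemma erealQuantile_mono (F : ℝ → ℝ) : Monotone (erealQuantile F) := by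
  intro u v huv
  apply sInf_le_sInf
  exact Set.image_mono (fun t ht => le_trans huv ht)

lemma erealQuantile_le_iff {F : ℝ → ℝ} (hmono : Monotone F)
    (hrc : ∀ x, ContinuousWithinAt F (Set.Ici x) x) (u x : ℝ) :
    erealQuantile F u ≤ (x : EReal) ↔ u ≤ F x := by
  constructor
  · intro h
    -- for every t > x, u ≤ F t
    have key : ∀ t : ℝ, x < t → u ≤ F t := by
      intro t ht
      have hlt : erealQuantile F u < (t : EReal) :=
        lt_of_le_of_lt h (by exact_mod_cast ht)
      obtain ⟨a, ha, hat⟩ := sInf_lt_iff.1 hlt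
      obtain ⟨s, hs, rfl⟩ := ha
      have hst : s ≤ t := by exact_mod_cast hat.le
      exact le_trans hs (hmono hst)
    have hc : ContinuousWithinAt F (Set.Ioi x) x :=
      (hrc x).mono (Set.Ioi_subset_Ici le_rfl)
    have := ge_of_tendsto hc (Filter.eventually_of_mem self_mem_nhdsWithin
      (fun t ht => key t ht))
    exact this
  · intro h
    exact sInf_le ⟨x, h, rfl⟩

lemma erealQuantile_preimage {F : ℝ → ℝ} (hmono : Monotone F)
    (hrc : ∀ x, ContinuousWithinAt F (Set.Ici x) x) (x : ℝ) :
    erealQuantile F ⁻¹' Set.Iic (x : EReal) = Set.Iic (F x) := by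
  ext u
  simp [Set.mem_preimage, erealQuantile_le_iff hmono hrc]

lemma vol_Iic_inter (c : ℝ) (h0 : 0 ≤ c) (h1 : c ≤ 1) :
    volume (Set.Iic c ∩ Set.Ioo (0:ℝ) 1) = ENNReal.ofReal c := by
  rcases eq_or_lt_of_le h1 with rfl | h1
  · have : Set.Iic (1:ℝ) ∩ Set.Ioo (0:ℝ) 1 = Set.Ioo 0 1 := by
      ext t; simp only [Set.mem_inter_iff, Set.mem_Iic, Set.mem_Ioo]
      constructor
      · rintro ⟨_, h⟩; exact h
      · rintro ⟨a, b⟩; exact ⟨b.le, a, b⟩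
    rw [this, Real.volume_Ioo]; simp
  · have : Set.Iic c ∩ Set.Ioo (0:ℝ) 1 = Set.Ioc 0 c := by
      ext t; simp only [Set.mem_inter_iff, Set.mem_Iic, Set.mem_Ioo, Set.mem_Ioc]
      constructor
      · rintro ⟨h, a, _⟩; exact ⟨a, h⟩
      · rintro ⟨a, b⟩; exact ⟨b, a, lt_of_le_of_lt b h1⟩
    rw [this, Real.volume_Ioc]; simp

theorem stmt_13 (F G : ℝ → ℝ)
    (hF : Monotone F ∧ (∀ x, F x ∈ Set.Icc (0:ℝ) 1) ∧
      ∀ x, ContinuousWithinAt F (Set.Ici x) x)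
    (hG : Monotone G ∧ (∀ x, G x ∈ Set.Icc (0:ℝ) 1) ∧
      ∀ x, ContinuousWithinAt G (Set.Ici x) x)
    (hle : ∀ x, F x ≤ G x) :
    ∃ Pi : Measure (EReal × EReal), IsProbabilityMeasure Pi ∧
      Pi {q : EReal × EReal | q.1 ≤ q.2} = 1 ∧
      (∀ x : ℝ, Pi.map Prod.fst {y : EReal | y ≤ (x : EReal)} = ENNReal.ofReal (G x)) ∧
      (∀ x : ℝ, Pi.map Prod.snd {y : EReal | y ≤ (x : EReal)} = ENNReal.ofReal (F x)) := by
  obtain ⟨hFm, hF01, hFrc⟩ := hF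
  obtain ⟨hGm, hG01, hGrc⟩ := hG
  set μ : Measure ℝ := volume.restrict (Set.Ioo 0 1) with hμ
  have hμprob : IsProbabilityMeasure μ := by
    constructor
    rw [hμ, Measure.restrict_apply MeasurableSet.univ, Set.univ_inter, Real.volume_Ioo]
    simp
  have hqF : Measurable (erealQuantile F) := (erealQuantile_mono F).measurable
  have hqG : Measurable (erealQuantile G) := (erealQuantile_mono G).measurable
  have hpair : Measurable (fun u : ℝ => (erealQuantile G u, erealQuantile F u)) :=
    hqG.prodMk hqF
  refine ⟨μ.map (fun u => (erealQuantile G u, erealQuantile F u)), ?_, ?_, ?_, ?_⟩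
  · exact Measure.isProbabilityMeasure_map hpair.aemeasurable
  · rw [Measure.map_apply hpair (measurableSet_le measurable_fst measurable_snd)]
    have : (fun u : ℝ => (erealQuantile G u, erealQuantile F u)) ⁻¹'
        {q : EReal × EReal | q.1 ≤ q.2} = Set.univ := by
      ext u
      simp only [Set.mem_preimage, Set.mem_setOf_eq, Set.mem_univ, iff_true]
      apply sInf_le_sInf
      exact Set.image_mono (fun t ht => le_trans ht (hle t))
    rw [this]
    exact measure_univ
  · intro x
    rw [Measure.map_map measurable_fst hpair]
    have : (Prod.fst ∘ fun u : ℝ => (erealQuantile G u, erealQuantile F u)) =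
        erealQuantile G := rfl
    have hset : {y : EReal | y ≤ (x : EReal)} = Set.Iic (x : EReal) := rfl
    rw [this, hset, Measure.map_apply hqG measurableSet_Iic,
      erealQuantile_preimage hGm hGrc, hμ,
      Measure.restrict_apply measurableSet_Iic]
    exact vol_Iic_inter _ (hG01 x).1 (hG01 x).2
  · intro x
    rw [Measure.map_map measurable_snd hpair]
    have : (Prod.snd ∘ fun u : ℝ => (erealQuantile G u, erealQuantile F u)) =
        erealQuantile F := rfl
    have hset : {y : EReal | y ≤ (x : EReal)} = Set.Iic (x : EReal) := rfl
    rw [this, hset, Measure.map_apply hqF measurableSet_Iic,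
      erealQuantile_preimage hFm hFrc, hμ,
      Measure.restrict_apply measurableSet_Iic]
    exact vol_Iic_inter _ (hF01 x).1 (hF01 x).2
end
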